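/- Let μ = Σ_{j=1}^n w_j δ_{x_j} with weights w_j > 0 summing to 1 and x_1 ≤ ⋯ ≤ x_n, and let ν satisfy Assumption (A1)-(A3). Then F is a fixed point of the operator A F = F_μ ∘ (φ ∗ (Q_ν ∘ (φ ∗ F))) if and only if F is the CDF of Σ_{j=1}^n w_j δ_{y_j} for points y_1 ≤ ⋯ ≤ y_n solving the nonlinear system ∫_ℝ Q_ν(Σ_{j=1}^n w_j Φ(y_i − y_j − z)) φ(z) dz = x_i for each i ∈ {1,…,n}. -/

import Mathlib

open MeasureTheory ProbabilityTheory Filter Topology Set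

noncomputable def stdGauss (x : ℝ) : ℝ := Real.exp (-(x ^ 2) / 2) / Real.sqrt (2 * Real.pi)

noncomputable def stdGaussCDF (x : ℝ) : ℝ := ∫ t in Set.Iic x, stdGauss t

noncomputable def quantile (ν : Measure ℝ) (u : ℝ) : ℝ :=
  sInf {x : ℝ | u ≤ ProbabilityTheory.cdf ν x}

def msupport (ν : Measure ℝ) : Set ℝ := {x | ∀ U ∈ nhds x, 0 < ν U}

def IsCDF (F : ℝ → ℝ) : Prop :=
  Monotone F ∧ (∀ x, F x ∈ Set.Icc (0 : ℝ) 1) ∧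
    Filter.Tendsto F Filter.atBot (nhds 0) ∧ Filter.Tendsto F Filter.atTop (nhds 1)

/-- The fixed-point operator `A F = F_μ ∘ (φ ∗ (Q_ν ∘ (φ ∗ F)))`. -/
noncomputable def opA (μ ν : Measure ℝ) (F : ℝ → ℝ) : ℝ → ℝ := fun t =>
  ProbabilityTheory.cdf μ (∫ a, quantile ν (∫ b, F (t - a - b) * stdGauss b) * stdGauss a)



lemma stdGauss_pos (x : ℝ) : 0 < stdGauss x := by
  apply div_pos (Real.exp_pos _)
  exact Real.sqrt_pos.2 (by positivity)

lemma stdGauss_eq (x : ℝ) : stdGauss x = Real.exp (-(1/2) * x ^ 2) * (Real.sqrt (2 * Real.pi))⁻¹ := by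
  rw [stdGauss, div_eq_mul_inv]; ring_nf

lemma continuous_stdGauss : Continuous stdGauss := by
  unfold stdGauss
  exact (Real.continuous_exp.comp (by continuity)).div_const _

lemma integrable_stdGauss : Integrable stdGauss := by
  simp only [funext stdGauss_eq]
  exact (integrable_exp_neg_mul_sq (by norm_num : (0:ℝ) < 1/2)).mul_const _

lemma integral_stdGauss : ∫ x, stdGauss x = 1 := by
  simp only [funext stdGauss_eq]
  rw [integral_mul_const, integral_gaussian]
  rw [mul_inv_eq_one₀]
  · norm_num [mul_comm]
  · intro h
    have := Real.sqrt_eq_zero'.1 h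
    nlinarith [Real.pi_pos]

lemma setIntegral_stdGauss_pos {s : Set ℝ} (hs : MeasurableSet s) (h0 : 0 < volume s) :
    0 < ∫ t in s, stdGauss t := by
  rw [setIntegral_pos_iff_support_of_nonneg_ae
    (Eventually.of_forall fun t => (stdGauss_pos t).le) (integrable_stdGauss.integrableOn)]
  have : Function.support stdGauss = univ := by
    ext t; simp [Function.mem_support, (stdGauss_pos t).ne']
  rwa [this, univ_inter]

lemma stdGaussCDF_pos (x : ℝ) : 0 < stdGaussCDF x :=
  setIntegral_stdGauss_pos measurableSet_Iic (by simp)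

lemma stdGaussCDF_mono : Monotone stdGaussCDF := fun a b hab =>
  setIntegral_mono_set integrable_stdGauss.integrableOn
    (Eventually.of_forall fun t => (stdGauss_pos t).le)
    (HasSubset.Subset.eventuallyLE (Iic_subset_Iic.2 hab))

lemma stdGaussCDF_add (a b : ℝ) (hab : a ≤ b) :
    stdGaussCDF b = stdGaussCDF a + ∫ t in Ioc a b, stdGauss t := by
  rw [stdGaussCDF, stdGaussCDF, ← setIntegral_union]
  · rw [Iic_union_Ioc_eq_Iic hab]
  · exact Iic_disjoint_Ioc le_rfl
  · exact measurableSet_Ioc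
  · exact integrable_stdGauss.integrableOn
  · exact integrable_stdGauss.integrableOn

lemma stdGaussCDF_strictMono : StrictMono stdGaussCDF := by
  intro a b hab
  rw [stdGaussCDF_add a b hab.le, lt_add_iff_pos_right]
  exact setIntegral_stdGauss_pos measurableSet_Ioc (by simp [hab])

lemma integral_Ioi_stdGauss (x : ℝ) : ∫ t in Ioi x, stdGauss t = 1 - stdGaussCDF x := by
  have := setIntegral_union (f := stdGauss) (Iic_disjoint_Ioi (le_refl x)) measurableSet_Ioi
    integrable_stdGauss.integrableOn integrable_stdGauss.integrableOn
  rw [Iic_union_Ioi] at this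
  rw [Measure.restrict_univ] at this
  rw [integral_stdGauss] at this
  rw [← stdGaussCDF] at this
  linarith

lemma stdGaussCDF_lt_one (x : ℝ) : stdGaussCDF x < 1 := by
  have := setIntegral_stdGauss_pos (s := Ioi x) measurableSet_Ioi (by simp)
  rw [integral_Ioi_stdGauss] at this; linarith

lemma null_of_null_nhds (ν : Measure ℝ) (s : Set ℝ) (hs : ∀ x ∈ s, ∃ U ∈ 𝓝 x, ν U = 0) :
    ν s = 0 := by
  have h : ∀ x : s, ∃ V : Set ℝ, IsOpen V ∧ (x : ℝ) ∈ V ∧ ν V = 0 := by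
    rintro ⟨x, hx⟩
    obtain ⟨U, hU, hU0⟩ := hs x hx
    obtain ⟨V, hVU, hVo, hxV⟩ := mem_nhds_iff.1 hU
    exact ⟨V, hVo, hxV, le_antisymm (hU0 ▸ measure_mono hVU) zero_le⟩
  choose V hVo hxV hV0 using h
  obtain ⟨T, hTc, hT⟩ := TopologicalSpace.isOpen_iUnion_countable V hVo
  have hsub : s ⊆ ⋃ i ∈ T, V i := by
    intro x hx
    rw [hT]
    exact mem_iUnion.2 ⟨⟨x, hx⟩, hxV _⟩
  refine le_antisymm (le_trans (measure_mono hsub) ?_) zero_le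
  rw [(measure_biUnion_null_iff hTc).2 fun i _ => hV0 i]

lemma msupport_nonempty (ν : Measure ℝ) [IsProbabilityMeasure ν] : (msupport ν).Nonempty := by
  by_contra h
  rw [not_nonempty_iff_eq_empty] at h
  have : ν univ = 0 := by
    apply null_of_null_nhds
    intro x _
    by_contra hx
    push_neg at hx
    have : x ∈ msupport ν := fun U hU => by
      rcases (show 0 ≤ ν U from zero_le).lt_or_eq with h' | h'
      · exact h'
      · exact absurd h'.symm (hx U hU)
    simp [h] at this
  simp at this

-- continuity of the cdf of an atomless probability measure
lemma continuous_cdf_of_noAtoms (ν : Measure ℝ) [IsProbabilityMeasure ν]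
    (h0 : ∀ a : ℝ, ν {a} = 0) : Continuous (cdf ν) := by
  rw [continuous_iff_continuousAt]
  intro a
  rw [(monotone_cdf ν).continuousAt_iff_leftLim_eq_rightLim]
  have hr : Function.rightLim (cdf ν) a = cdf ν a := by
    apply rightLim_eq_of_tendsto
    exact ((cdf ν).right_continuous a).tendsto.mono_left (nhdsWithin_mono _ Ioi_subset_Ici_self)
  have hl : Function.leftLim (cdf ν) a = cdf ν a := by
    have hm := (cdf ν).measure_singleton a
    rw [measure_cdf, h0 a, eq_comm, ENNReal.ofReal_eq_zero] at hm
    have := Monotone.leftLim_le (monotone_cdf ν) (le_refl a)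
    linarith
  rw [hr, hl]

section conv
variable {k : ℝ → ℝ} {M : ℝ} (hk : Measurable k) (hM : ∀ u, |k u| ≤ M)

include hk hM in
lemma integrable_mul_stdGauss_right (t : ℝ) : Integrable (fun u => k u * stdGauss (t - u)) := by
  have hmeas : AEStronglyMeasurable (fun u => k u * stdGauss (t - u)) volume :=
    (hk.mul ((continuous_stdGauss.comp (continuous_const.sub continuous_id)).measurable)).aestronglyMeasurable
  refine Integrable.mono' ((integrable_stdGauss.comp_sub_left t).const_mul M) hmeas
    (Eventually.of_forall fun u => ?_)
  rw [norm_mul]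
  apply mul_le_mul (hM u) (le_of_eq (Real.norm_of_nonneg (stdGauss_pos _).le)) (norm_nonneg _)
  exact le_trans (abs_nonneg _) (hM u)

include hk hM in
lemma integrable_mul_stdGauss_left (t : ℝ) : Integrable (fun a => k (t - a) * stdGauss a) := by
  have hmeas : AEStronglyMeasurable (fun a => k (t - a) * stdGauss a) volume :=
    ((hk.comp (measurable_const.sub measurable_id)).mul
      continuous_stdGauss.measurable).aestronglyMeasurable
  refine Integrable.mono' (integrable_stdGauss.const_mul M) hmeas (Eventually.of_forall fun a => ?_)
  rw [norm_mul]
  apply mul_le_mul (hM _) (le_of_eq (Real.norm_of_nonneg (stdGauss_pos _).le)) (norm_nonneg _)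
  exact le_trans (abs_nonneg (k 0)) (hM 0)

lemma conv_swap (t : ℝ) :
    ∫ a, k (t - a) * stdGauss a = ∫ u, k u * stdGauss (t - u) := by
  have := integral_sub_left_eq_self (μ := volume) (fun u => k u * stdGauss (t - u)) t
  simp only [sub_sub_cancel] at this
  exact this

lemma exp_quarter_integrable (t₀ : ℝ) :
    Integrable (fun u : ℝ => Real.exp (-(1/4 : ℝ) * (t₀ - u) ^ 2)) :=
  (integrable_exp_neg_mul_sq (by norm_num : (0:ℝ) < 1/4)).comp_sub_left t₀

lemma stdGauss_shift_bound {t t₀ u : ℝ} (h : |t - t₀| ≤ 1) :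
    stdGauss (t - u) ≤ Real.exp 1 * Real.exp (-(1/4 : ℝ) * (t₀ - u) ^ 2) / Real.sqrt (2 * Real.pi) := by
  rw [stdGauss, div_le_div_iff_of_pos_right (Real.sqrt_pos.2 (by positivity)), ← Real.exp_add]
  apply Real.exp_le_exp.2
  have h2 : (t - t₀) ^ 2 ≤ 1 := by nlinarith [abs_nonneg (t - t₀), sq_abs (t - t₀)]
  nlinarith [sq_nonneg ((t₀ - u) - 2 * (t - u))]

include hk hM in
lemma conv_continuous : Continuous (fun t => ∫ u, k u * stdGauss (t - u)) := by
  rw [continuous_iff_continuousAt]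
  intro t₀
  have hM0 : 0 ≤ M := le_trans (abs_nonneg _) (hM 0)
  apply tendsto_integral_filter_of_dominated_convergence
    (fun u => M * (Real.exp 1 * Real.exp (-(1/4 : ℝ) * (t₀ - u) ^ 2) / Real.sqrt (2 * Real.pi)))
  · filter_upwards with t
    exact (integrable_mul_stdGauss_right hk hM t).aestronglyMeasurable
  · filter_upwards [eventually_abs_sub_lt t₀ one_pos] with t ht
    filter_upwards with u
    rw [norm_mul, Real.norm_of_nonneg (stdGauss_pos _).le]
    exact mul_le_mul (hM u) (stdGauss_shift_bound ht.le) (stdGauss_pos _).le hM0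
  · exact (((exp_quarter_integrable t₀).const_mul _).div_const _).const_mul M
  · filter_upwards with u
    exact ((continuous_stdGauss.comp (continuous_id.sub continuous_const)).tendsto t₀).const_mul _
      |>.congr (fun t => rfl)
end conv

section nu
variable (ν : Measure ℝ) [IsProbabilityMeasure ν] (hA1 : ν ≪ volume)
  (c : ℝ) (hc : 0 < c)
  (hA3 : ∀ᵐ z ∂volume, z ∈ convexHull ℝ (msupport ν) → c ≤ (ν.rnDeriv volume z).toReal)

include hA1 hA3 in
lemma nu_Icc_lb {a b : ℝ} (hab : a ≤ b) (hK : Icc a b ⊆ convexHull ℝ (msupport ν)) :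
    c * (b - a) ≤ (ν (Icc a b)).toReal := by
  have h1 : (ν (Icc a b)).toReal = ∫ z in Icc a b, (ν.rnDeriv volume z).toReal :=
    (Measure.setIntegral_toReal_rnDeriv hA1 _).symm
  have h2 : ∫ z in Icc a b, (c : ℝ) ≤ ∫ z in Icc a b, (ν.rnDeriv volume z).toReal := by
    apply setIntegral_mono_on_ae (integrableOn_const measure_Icc_lt_top.ne)
      (Measure.integrable_toReal_rnDeriv.integrableOn) measurableSet_Icc
    filter_upwards [hA3] with z hz hzs
    exact hz (hK hzs)
  rw [setIntegral_const, measureReal_def, Real.volume_Icc, smul_eq_mul] at h2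
  rw [h1]
  calc c * (b - a) ≤ (ENNReal.ofReal (b - a)).toReal * c := by
        rw [ENNReal.toReal_ofReal (by linarith)]; ring_nf; exact le_refl _
    _ ≤ _ := h2

include hA1 hc hA3 in
lemma nu_struct : ∃ A B : ℝ, A < B ∧
    Ioo A B ⊆ convexHull ℝ (msupport ν) ∧
    convexHull ℝ (msupport ν) ⊆ Icc A B ∧
    cdf ν A = 0 ∧ cdf ν B = 1 ∧
    (∀ u v, A ≤ u → u < v → v ≤ B → cdf ν u < cdf ν v) := by
  set K := convexHull ℝ (msupport ν) with hKdef
  have hKconv : Convex ℝ K := convex_convexHull ℝ _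
  have hKord : OrdConnected K := hKconv.ordConnected
  obtain ⟨k0, hk0⟩ : K.Nonempty := (msupport_nonempty ν).mono (subset_convexHull ℝ _)
  have hle1 : ∀ s : Set ℝ, (ν s).toReal ≤ 1 := fun s => by
    simpa using ENNReal.toReal_mono (ENNReal.one_ne_top) (prob_le_one (μ := ν) (s := s))
  have hbddA : BddAbove K := by
    by_contra hb
    obtain ⟨k, hkK, hkgt⟩ := not_bddAbove_iff.1 hb (k0 + 2 / c)
    have hsub : Icc k0 (k0 + 2 / c) ⊆ K :=
      subset_trans (Icc_subset_Icc_right hkgt.le) (hKord.out hk0 hkK)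
    have := nu_Icc_lb ν hA1 c hA3 (by have h2c : (0:ℝ) < 2/c := div_pos two_pos hc; linarith : k0 ≤ k0 + 2/c) hsub
    rw [add_sub_cancel_left, mul_div_cancel₀ _ hc.ne'] at this
    linarith [hle1 (Icc k0 (k0 + 2 / c))]
  have hbddB : BddBelow K := by
    by_contra hb
    obtain ⟨k, hkK, hklt⟩ := not_bddBelow_iff.1 hb (k0 - 2 / c)
    have hsub : Icc (k0 - 2 / c) k0 ⊆ K :=
      subset_trans (Icc_subset_Icc_left hklt.le) (hKord.out hkK hk0)
    have := nu_Icc_lb ν hA1 c hA3 (by have h2c : (0:ℝ) < 2/c := div_pos two_pos hc; linarith : k0 - 2/c ≤ k0) hsub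
    rw [sub_sub_cancel, mul_div_cancel₀ _ hc.ne'] at this
    linarith [hle1 (Icc (k0 - 2 / c) k0)]
  set A := sInf K with hA
  set B := sSup K with hB
  have hKIcc : K ⊆ Icc A B := fun z hz => ⟨csInf_le hbddB hz, le_csSup hbddA hz⟩
  have hIooK : Ioo A B ⊆ K := by
    intro z hz
    obtain ⟨k1, hk1K, hk1⟩ := (csInf_lt_iff hbddB ⟨k0, hk0⟩).1 hz.1
    obtain ⟨k2, hk2K, hk2⟩ := (lt_csSup_iff hbddA ⟨k0, hk0⟩).1 hz.2
    exact hKord.out hk1K hk2K ⟨hk1.le, hk2.le⟩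
  have hatom : ∀ a : ℝ, ν {a} = 0 := fun a => hA1 (Real.volume_singleton)
  have hIio : ν (Iio A) = 0 := by
    apply null_of_null_nhds
    intro z hz
    have hzs : z ∉ msupport ν := fun hmem =>
      absurd ((hKIcc ((subset_convexHull ℝ _) hmem)).1) (not_le.2 hz)
    rw [msupport, mem_setOf_eq] at hzs
    push_neg at hzs
    obtain ⟨U, hU, hU0⟩ := hzs
    exact ⟨U, hU, le_antisymm hU0 zero_le⟩
  have hIoi : ν (Ioi B) = 0 := by
    apply null_of_null_nhds
    intro z hz
    have hzs : z ∉ msupport ν := fun hmem =>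
      absurd ((hKIcc ((subset_convexHull ℝ _) hmem)).2) (not_le.2 hz)
    rw [msupport, mem_setOf_eq] at hzs
    push_neg at hzs
    obtain ⟨U, hU, hU0⟩ := hzs
    exact ⟨U, hU, le_antisymm hU0 zero_le⟩
  have hcdfA : cdf ν A = 0 := by
    rw [cdf_eq_real, measureReal_def]
    have : ν (Iic A) = 0 := by
      have : Iic A = Iio A ∪ {A} := by
        ext t; simp [le_iff_lt_or_eq]
      rw [this]
      exact le_antisymm (le_trans (measure_union_le _ _) (by rw [hIio, hatom A]; simp)) zero_le
    rw [this]; simp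
  have hcdfB : cdf ν B = 1 := by
    rw [cdf_eq_real, measureReal_def]
    have hcompl : Iic B = (Ioi B)ᶜ := by simp
    rw [hcompl, measure_compl measurableSet_Ioi (measure_ne_top ν _), hIoi, measure_univ]
    simp
  have hstrict : ∀ u v, A ≤ u → u < v → v ≤ B → cdf ν u < cdf ν v := by
    intro u v hAu huv hvB
    have hdiff : cdf ν v - cdf ν u = (ν (Ioc u v)).toReal := by
      rw [cdf_eq_real, cdf_eq_real, measureReal_def, measureReal_def]
      have hsplit : Iic v = Iic u ∪ Ioc u v := (Iic_union_Ioc_eq_Iic huv.le).symm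
      rw [hsplit, measure_union (Iic_disjoint_Ioc le_rfl) measurableSet_Ioc,
        ENNReal.toReal_add (measure_ne_top _ _) (measure_ne_top _ _)]
      ring
    set u' := u + (v - u) / 3 with hu'
    set v' := v - (v - u) / 3 with hv'
    have hu'v' : u' ≤ v' := by rw [hu', hv']; linarith
    have hsub1 : Icc u' v' ⊆ Ioc u v := fun z hz => ⟨by
      have := hz.1; rw [hu'] at this; linarith, by
      have := hz.2; rw [hv'] at this; linarith⟩
    have hsub2 : Icc u' v' ⊆ K := by
      intro z hz
      apply hIooK
      constructor
      · have := hz.1; rw [hu'] at this; linarith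
      · have := hz.2; rw [hv'] at this; linarith
    have hlb := nu_Icc_lb ν hA1 c hA3 hu'v' hsub2
    have hpos : 0 < c * (v' - u') := by
      apply mul_pos hc; rw [hu', hv']; linarith
    have hmono : (ν (Icc u' v')).toReal ≤ (ν (Ioc u v)).toReal :=
      ENNReal.toReal_mono (measure_ne_top _ _) (measure_mono hsub1)
    linarith
  have hAB : A < B := by
    rcases lt_or_ge A B with h | h
    · exact h
    · exfalso
      have hBA : cdf ν B ≤ cdf ν A := monotone_cdf ν h
      rw [hcdfA, hcdfB] at hBA; linarith
  exact ⟨A, B, hAB, hIooK, hKIcc, hcdfA, hcdfB, hstrict⟩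

end nu

section quant
variable (ν : Measure ℝ) (A B : ℝ)
  (hcont : Continuous (cdf ν)) (hAB : A < B) (h0 : cdf ν A = 0) (h1 : cdf ν B = 1)
  (hstrict : ∀ u v, A ≤ u → u < v → v ≤ B → cdf ν u < cdf ν v)

include h1 in
lemma quantile_set_nonempty {u : ℝ} (hu1 : u ≤ 1) : {x : ℝ | u ≤ cdf ν x}.Nonempty :=
  ⟨B, by simpa [h1] using hu1⟩

include h0 in
lemma quantile_set_lb {u : ℝ} (hu0 : 0 < u) : ∀ x ∈ {x : ℝ | u ≤ cdf ν x}, A ≤ x := by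
  intro x hx
  by_contra hxA
  push_neg at hxA
  have : cdf ν x ≤ cdf ν A := monotone_cdf ν hxA.le
  rw [h0] at this
  exact absurd (lt_of_lt_of_le hu0 hx) (not_lt.2 this)

include h0 in
lemma quantile_set_bddBelow {u : ℝ} (hu0 : 0 < u) : BddBelow {x : ℝ | u ≤ cdf ν x} :=
  ⟨A, quantile_set_lb ν A h0 hu0⟩

include h0 h1 in
lemma quantile_mem_Icc {u : ℝ} (hu0 : 0 < u) (hu1 : u ≤ 1) : quantile ν u ∈ Icc A B :=
  ⟨le_csInf (quantile_set_nonempty ν B h1 hu1) (quantile_set_lb ν A h0 hu0),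
    csInf_le (quantile_set_bddBelow ν A h0 hu0) (by simpa [h1] using hu1)⟩

include hcont h0 h1 in
lemma cdf_quantile {u : ℝ} (hu0 : 0 < u) (hu1 : u ≤ 1) : cdf ν (quantile ν u) = u := by
  have hclosed : IsClosed {x : ℝ | u ≤ cdf ν x} := isClosed_le continuous_const hcont
  have hmem := hclosed.csInf_mem (quantile_set_nonempty ν B h1 hu1)
    (quantile_set_bddBelow ν A h0 hu0)
  refine le_antisymm ?_ hmem
  by_contra hlt
  push_neg at hlt
  have hopen : IsOpen {y : ℝ | u < cdf ν y} := isOpen_lt continuous_const hcont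
  obtain ⟨ε, hε, hball⟩ := Metric.isOpen_iff.1 hopen _ hlt
  have hy : quantile ν u - ε / 2 ∈ {x : ℝ | u ≤ cdf ν x} := by
    have hd : dist (quantile ν u - ε/2) (quantile ν u) < ε := by
      rw [Real.dist_eq, show quantile ν u - ε/2 - quantile ν u = -(ε/2) by ring, abs_neg,
        abs_of_pos (by linarith)]
      linarith
    have h2 : u < cdf ν (quantile ν u - ε/2) := hball (Metric.mem_ball.2 hd)
    exact h2.le
  have := csInf_le (quantile_set_bddBelow ν A h0 hu0) hy
  rw [quantile] at *
  linarith

include hcont h0 h1 in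
lemma quantile_strictMonoOn {u v : ℝ} (hu0 : 0 < u) (huv : u < v) (hv1 : v ≤ 1) :
    quantile ν u < quantile ν v := by
  have h1' := cdf_quantile ν A B hcont h0 h1 hu0 (le_of_lt (lt_of_lt_of_le huv hv1))
  have h2' := cdf_quantile ν A B hcont h0 h1 (lt_trans hu0 huv) hv1
  by_contra hle
  push_neg at hle
  have := monotone_cdf ν hle
  rw [h1', h2'] at this
  linarith

include h0 h1 in
lemma quantile_mono {u v : ℝ} (hu0 : 0 < u) (huv : u ≤ v) (hv1 : v ≤ 1) :
    quantile ν u ≤ quantile ν v := by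
  apply csInf_le_csInf (quantile_set_bddBelow ν A h0 hu0)
    (quantile_set_nonempty ν B h1 hv1)
  exact fun x hx => le_trans huv hx

include hAB h0 h1 hstrict in
lemma quantile_near_one {ε : ℝ} (hε : 0 < ε) :
    ∃ δ > 0, ∀ v, 1 - δ < v → v < 1 → B - ε < quantile ν v := by
  set x' := max A (B - ε / 2) with hx'
  have hx'B : x' < B := by
    rw [hx']
    apply max_lt hAB (by linarith)
  have hcdfx' : cdf ν x' < 1 := by
    rw [← h1]
    exact hstrict x' B (le_max_left _ _) hx'B (le_refl _)
  refine ⟨1 - cdf ν x', by linarith, fun v hv hv1 => ?_⟩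
  have hvx' : cdf ν x' < v := by linarith
  have : x' ≤ quantile ν v := by
    apply le_csInf (quantile_set_nonempty ν B h1 hv1.le)
    intro x hx
    by_contra hxx'
    push_neg at hxx'
    have := monotone_cdf ν hxx'.le
    have : v ≤ cdf ν x' := le_trans hx this
    linarith
  have : B - ε / 2 ≤ quantile ν v := le_trans (le_max_right _ _) this
  linarith

include hAB h0 h1 hstrict in
lemma quantile_near_zero {ε : ℝ} (hε : 0 < ε) :
    ∃ δ > 0, ∀ v, 0 < v → v < δ → quantile ν v < A + ε := by
  set x'' := min B (A + ε / 2) with hx''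
  have hAx'' : A < x'' := lt_min hAB (by linarith)
  have hcdfx'' : 0 < cdf ν x'' := by
    rw [← h0]
    exact hstrict A x'' (le_refl _) hAx'' (min_le_left _ _)
  refine ⟨cdf ν x'', hcdfx'', fun v hv0 hvδ => ?_⟩
  have : quantile ν v ≤ x'' := csInf_le (quantile_set_bddBelow ν A h0 hv0) (le_of_lt hvδ)
  have : quantile ν v ≤ A + ε / 2 := le_trans this (min_le_right _ _)
  linarith

end quant

section mu
variable {n : ℕ} (w : Fin n → ℝ) (x : Fin n → ℝ) (hw : ∀ j, 0 < w j) (hw1 : ∑ j, w j = 1)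
  (μ : Measure ℝ) (hμ : μ = ∑ j, ENNReal.ofReal (w j) • Measure.dirac (x j))

include hw hw1 hμ in
lemma mu_prob : IsProbabilityMeasure μ := by
  constructor
  rw [hμ, Measure.finset_sum_apply]
  simp only [Measure.smul_apply, smul_eq_mul, Measure.dirac_apply_of_mem (mem_univ _), mul_one]
  rw [← ENNReal.ofReal_sum_of_nonneg (fun j _ => (hw j).le), hw1, ENNReal.ofReal_one]

include hw hw1 hμ in
lemma mu_cdf (t : ℝ) : cdf μ t = ∑ j, if x j ≤ t then w j else 0 := by
  haveI := mu_prob w x hw hw1 μ hμ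
  rw [cdf_eq_real, measureReal_def, hμ, Measure.finset_sum_apply]
  rw [ENNReal.toReal_sum (fun j _ => ?_)]
  · apply Finset.sum_congr rfl
    intro j _
    rw [Measure.smul_apply, smul_eq_mul, Measure.dirac_apply' _ measurableSet_Iic]
    by_cases h : x j ≤ t
    · rw [indicator_of_mem (by simpa using h), Pi.one_apply, mul_one,
        ENNReal.toReal_ofReal (hw j).le, if_pos h]
    · rw [indicator_of_notMem (by simpa using h), mul_zero, ENNReal.toReal_zero, if_neg h]
  · rw [Measure.smul_apply, smul_eq_mul]
    exact ENNReal.mul_ne_top ENNReal.ofReal_ne_top (measure_ne_top _ _)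

include hw hμ in
lemma mu_msupport_mem (i : Fin n) : x i ∈ msupport μ := by
  intro U hU
  have h1 : ENNReal.ofReal (w i) * Measure.dirac (x i) U ≤ μ U := by
    rw [hμ, Measure.finset_sum_apply]
    exact Finset.single_le_sum (f := fun j => (ENNReal.ofReal (w j) • Measure.dirac (x j)) U)
      (fun j _ => zero_le) (Finset.mem_univ i)
  have h2 : Measure.dirac (x i) U = 1 := Measure.dirac_apply_of_mem (mem_of_mem_nhds hU)
  rw [h2, mul_one] at h1
  exact lt_of_lt_of_le (by simp [hw i]) h1
end mu

noncomputable def phiConv (F : ℝ → ℝ) (s : ℝ) : ℝ := ∫ b, F (s - b) * stdGauss b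

section conv1
variable {F : ℝ → ℝ} (hF : IsCDF F)

include hF in
lemma phiConv_integrand_integrable (s : ℝ) : Integrable (fun b => F (s - b) * stdGauss b) :=
  integrable_mul_stdGauss_left hF.1.measurable
    (fun u => abs_le.2 ⟨by linarith [(hF.2.1 u).1], (hF.2.1 u).2⟩) s

include hF in
lemma phiConv_mono : Monotone (phiConv F) := by
  intro s s' hss'
  apply integral_mono (phiConv_integrand_integrable hF s) (phiConv_integrand_integrable hF s')
  intro b
  exact mul_le_mul_of_nonneg_right (hF.1 (by linarith)) (stdGauss_pos b).le

include hF in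
lemma phiConv_nonneg (s : ℝ) : 0 ≤ phiConv F s :=
  integral_nonneg fun b => mul_nonneg (hF.2.1 _).1 (stdGauss_pos b).le

include hF in
lemma phiConv_pos (s : ℝ) : 0 < phiConv F s := by
  obtain ⟨p, hp⟩ : ∃ p, 1/2 ≤ F p := by
    have := hF.2.2.2.eventually (eventually_ge_nhds (by norm_num : (1:ℝ)/2 < 1))
    exact (this.exists)
  have hlow : ∀ b, Set.indicator (Iic (s - p)) (fun b => 1/2 * stdGauss b) b
      ≤ F (s - b) * stdGauss b := by
    intro b
    by_cases hb : b ∈ Iic (s - p)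
    · rw [indicator_of_mem hb]
      apply mul_le_mul_of_nonneg_right _ (stdGauss_pos b).le
      have hb' : b ≤ s - p := hb
      exact le_trans hp (hF.1 (by linarith))
    · rw [indicator_of_notMem hb]
      exact mul_nonneg (hF.2.1 _).1 (stdGauss_pos b).le
  have hint : ∫ b, Set.indicator (Iic (s - p)) (fun b => 1/2 * stdGauss b) b
      = 1/2 * stdGaussCDF (s - p) := by
    rw [integral_indicator measurableSet_Iic, MeasureTheory.integral_const_mul ((1:ℝ)/2) _]
    rfl
  have := integral_mono (((integrable_stdGauss.const_mul (1/2 : ℝ)).indicator measurableSet_Iic))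
    (phiConv_integrand_integrable hF s) hlow
  rw [hint] at this
  calc (0:ℝ) < 1/2 * stdGaussCDF (s - p) := by nlinarith [stdGaussCDF_pos (s - p)]
    _ ≤ phiConv F s := this

include hF in
lemma phiConv_lt_one (s : ℝ) : phiConv F s < 1 := by
  obtain ⟨p, hp⟩ : ∃ p, F p ≤ 1/2 := by
    have := hF.2.2.1.eventually (eventually_le_nhds (by norm_num : (0:ℝ) < 1/2))
    exact (this.exists)
  have key : phiConv F s ≤ 1 - 1/2 * (1 - stdGaussCDF (s - p)) := by
    have h1 : (1:ℝ) = ∫ b, stdGauss b := integral_stdGauss.symm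
    have hup : ∀ b, F (s - b) * stdGauss b ≤
        stdGauss b - Set.indicator (Ioi (s - p)) (fun b => 1/2 * stdGauss b) b := by
      intro b
      by_cases hb : b ∈ Ioi (s - p)
      · rw [indicator_of_mem hb]
        have hb' : s - p < b := hb
        have hFb : F (s - b) ≤ 1/2 := le_trans (hF.1 (by linarith)) hp
        nlinarith [stdGauss_pos b, (hF.2.1 (s-b)).1]
      · rw [indicator_of_notMem hb]
        nlinarith [stdGauss_pos b, (hF.2.1 (s-b)).2]
    have hint : ∫ b, (stdGauss b - Set.indicator (Ioi (s - p)) (fun b => 1/2 * stdGauss b) b)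
        = 1 - 1/2 * (1 - stdGaussCDF (s - p)) := by
      rw [integral_sub integrable_stdGauss
        ((integrable_stdGauss.const_mul (1/2:ℝ)).indicator measurableSet_Ioi),
        integral_stdGauss, integral_indicator measurableSet_Ioi, MeasureTheory.integral_const_mul ((1:ℝ)/2) _,
        integral_Ioi_stdGauss]
    calc phiConv F s ≤ _ := integral_mono (phiConv_integrand_integrable hF s)
          (integrable_stdGauss.sub ((integrable_stdGauss.const_mul (1/2:ℝ)).indicator
            measurableSet_Ioi)) hup
      _ = _ := hint
  have := stdGaussCDF_lt_one (s - p)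
  linarith

end conv1


section p9
variable {F : ℝ → ℝ} (hF : IsCDF F)

include hF in
lemma phiConv_tendsto_one : Tendsto (phiConv F) atTop (𝓝 1) := by
  have h := tendsto_integral_filter_of_dominated_convergence (μ := volume)
    (F := fun (s : ℝ) (b : ℝ) => F (s - b) * stdGauss b) (f := stdGauss)
    (bound := stdGauss) (l := atTop)
    (Eventually.of_forall fun s => (phiConv_integrand_integrable hF s).aestronglyMeasurable)
    (Eventually.of_forall fun s => (Eventually.of_forall fun b => by
      rw [norm_mul, Real.norm_of_nonneg (stdGauss_pos b).le,
        Real.norm_of_nonneg (hF.2.1 _).1]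
      nlinarith [(hF.2.1 (s - b)).2, stdGauss_pos b]))
    integrable_stdGauss
    (Eventually.of_forall fun b => by
      have h1 : Tendsto (fun s : ℝ => s - b) atTop atTop := tendsto_atTop_add_const_right _ _ tendsto_id
      have := (hF.2.2.2.comp h1).mul_const (stdGauss b)
      rwa [one_mul] at this)
  rwa [integral_stdGauss] at h

include hF in
lemma phiConv_tendsto_zero : Tendsto (phiConv F) atBot (𝓝 0) := by
  have h := tendsto_integral_filter_of_dominated_convergence (μ := volume)
    (F := fun (s : ℝ) (b : ℝ) => F (s - b) * stdGauss b) (f := fun _ => (0:ℝ))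
    (bound := stdGauss) (l := atBot)
    (Eventually.of_forall fun s => (phiConv_integrand_integrable hF s).aestronglyMeasurable)
    (Eventually.of_forall fun s => (Eventually.of_forall fun b => by
      rw [norm_mul, Real.norm_of_nonneg (stdGauss_pos b).le,
        Real.norm_of_nonneg (hF.2.1 _).1]
      nlinarith [(hF.2.1 (s - b)).2, stdGauss_pos b]))
    integrable_stdGauss
    (Eventually.of_forall fun b => by
      have h1 : Tendsto (fun s : ℝ => s - b) atBot atBot := tendsto_atBot_add_const_right _ _ tendsto_id
      have := (hF.2.2.1.comp h1).mul_const (stdGauss b)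
      rwa [zero_mul] at this)
  rwa [integral_zero] at h

lemma phiConv_step {n : ℕ} (y : Fin n → ℝ) (w : Fin n → ℝ)
    (hFstep : ∀ t, F t = ∑ j, if y j ≤ t then w j else 0) (s : ℝ) :
    phiConv F s = ∑ j, w j * stdGaussCDF (s - y j) := by
  have hind : ∀ j (b : ℝ), (if y j ≤ s - b then w j else 0) * stdGauss b
      = Set.indicator (Iic (s - y j)) (fun b => w j * stdGauss b) b := by
    intro j b
    by_cases h : y j ≤ s - b
    · rw [if_pos h, indicator_of_mem (by simp only [mem_Iic]; linarith)]
    · rw [if_neg h, indicator_of_notMem (by simp only [mem_Iic]; intro hle; exact h (by linarith)),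
        zero_mul]
  calc phiConv F s = ∫ b, ∑ j, (if y j ≤ s - b then w j else 0) * stdGauss b := by
        rw [phiConv]
        congr 1
        ext b
        rw [hFstep (s - b), Finset.sum_mul]
    _ = ∑ j, ∫ b, (if y j ≤ s - b then w j else 0) * stdGauss b := by
        apply integral_finset_sum
        intro j _
        simp only [funext (hind j)]
        exact (integrable_stdGauss.const_mul (w j)).indicator measurableSet_Iic
    _ = ∑ j, w j * stdGaussCDF (s - y j) := by
        apply Finset.sum_congr rfl
        intro j _
        simp only [funext (hind j)]
        rw [integral_indicator measurableSet_Iic, MeasureTheory.integral_const_mul]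
        rfl
end p9

noncomputable def qconv (ν : Measure ℝ) (F : ℝ → ℝ) (u : ℝ) : ℝ := quantile ν (phiConv F u)

noncomputable def Gop (ν : Measure ℝ) (F : ℝ → ℝ) (t : ℝ) : ℝ :=
  ∫ a, qconv ν F (t - a) * stdGauss a

lemma opA_eq (μ ν : Measure ℝ) (F : ℝ → ℝ) (t : ℝ) : opA μ ν F t = cdf μ (Gop ν F t) := rfl

set_option maxHeartbeats 2000000 in
theorem stmt_16 (n : ℕ) (hn : 0 < n) (w : Fin n → ℝ) (x : Fin n → ℝ)
    (hw : ∀ j, 0 < w j) (hw1 : ∑ j, w j = 1) (hx : Monotone x)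
    (μ ν : Measure ℝ) [IsProbabilityMeasure ν]
    (hμ : μ = ∑ j, ENNReal.ofReal (w j) • Measure.dirac (x j))
    (hA1 : ν ≪ volume)
    (hA2 : msupport μ ⊆ interior (convexHull ℝ (msupport ν)))
    (c : ℝ) (hc : 0 < c)
    (hA3 : ∀ᵐ z ∂volume, z ∈ convexHull ℝ (msupport ν) →
      c ≤ (ν.rnDeriv volume z).toReal)
    (F : ℝ → ℝ) (hF : IsCDF F) :
    (∀ t, opA μ ν F t = F t) ↔
      ∃ y : Fin n → ℝ, Monotone y ∧
        (∀ t, F t = ∑ j, if y j ≤ t then w j else 0) ∧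
        (∀ i, ∫ z, quantile ν (∑ j, w j * stdGaussCDF (y i - y j - z)) * stdGauss z
          = x i) := by
  haveI hμP : IsProbabilityMeasure μ := mu_prob w x hw hw1 μ hμ
  obtain ⟨A, B, hAB, hIooK, hKIcc, hcdfA, hcdfB, hstrict⟩ := nu_struct ν hA1 c hc hA3
  have hνatom : ∀ a : ℝ, ν {a} = 0 := fun a => hA1 Real.volume_singleton
  have hcont : Continuous (cdf ν) := continuous_cdf_of_noAtoms ν hνatom
  have hxIoo : ∀ i, x i ∈ Ioo A B := by
    intro i
    have h1 := hA2 (mu_msupport_mem w x hw μ hμ i)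
    have h2 := interior_mono hKIcc h1
    rwa [interior_Icc] at h2
  have hq_abs : ∀ u, 0 < u → u ≤ 1 → |quantile ν u| ≤ max |A| |B| := by
    intro u h0 h1'
    obtain ⟨hqA, hqB⟩ := quantile_mem_Icc ν A B hcdfA hcdfB h0 h1'
    exact abs_le_max_abs_abs hqA hqB
  have hκmono : Monotone (qconv ν F) := by
    intro u v huv
    exact quantile_mono ν A B hcdfA hcdfB (phiConv_pos hF u) (phiConv_mono hF huv)
      (phiConv_lt_one hF v).le
  have hκabs : ∀ u, |qconv ν F u| ≤ max |A| |B| := fun u =>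
    hq_abs _ (phiConv_pos hF u) (phiConv_lt_one hF u).le
  have hGint : ∀ t, Integrable (fun a => qconv ν F (t - a) * stdGauss a) := fun t =>
    integrable_mul_stdGauss_left hκmono.measurable hκabs t
  have hGmono : Monotone (Gop ν F) := by
    intro t t' htt'
    apply integral_mono (hGint t) (hGint t')
    intro a
    exact mul_le_mul_of_nonneg_right (hκmono (by linarith)) (stdGauss_pos a).le
  have hμcdf := mu_cdf w x hw hw1 μ hμ
  have hGcongr : ∀ (y : Fin n → ℝ),
      (∀ t, F t = ∑ j, if y j ≤ t then w j else 0) → ∀ i : Fin n,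
      ∫ z, quantile ν (∑ j, w j * stdGaussCDF (y i - y j - z)) * stdGauss z = Gop ν F (y i) := by
    intro y hFstep i
    have hstep' := phiConv_step y w hFstep
    congr 1
    ext z
    have hsum : (∑ j, w j * stdGaussCDF (y i - y j - z)) = phiConv F (y i - z) := by
      rw [hstep' (y i - z)]
      exact Finset.sum_congr rfl fun j _ => by rw [sub_right_comm]
    rw [hsum]
    rfl
  constructor
  · -- forward direction
    intro hfix
    have hGcont : Continuous (Gop ν F) := by
      have h1 := conv_continuous hκmono.measurable hκabs
      have heq : Gop ν F = fun t => ∫ u, qconv ν F u * stdGauss (t - u) :=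
        funext fun t => conv_swap t
      rw [heq]; exact h1
    have hGtop : Tendsto (Gop ν F) atTop (𝓝 B) := by
      have hB : ∫ (a : ℝ), B * stdGauss a = B := by
        rw [MeasureTheory.integral_const_mul, integral_stdGauss, mul_one]
      have h := tendsto_integral_filter_of_dominated_convergence (μ := volume)
        (F := fun (t : ℝ) (a : ℝ) => qconv ν F (t - a) * stdGauss a)
        (f := fun a => B * stdGauss a)
        (bound := fun a => max |A| |B| * stdGauss a) (l := atTop)
        (Eventually.of_forall fun t => (hGint t).aestronglyMeasurable)
        (Eventually.of_forall fun t => (Eventually.of_forall fun a => by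
          rw [norm_mul, Real.norm_of_nonneg (stdGauss_pos a).le]
          exact mul_le_mul_of_nonneg_right (hκabs _) (stdGauss_pos a).le))
        (integrable_stdGauss.const_mul _)
        (Eventually.of_forall fun a => by
          apply Tendsto.mul_const
          rw [Metric.tendsto_nhds]
          intro ε hε
          obtain ⟨δ, hδ, hδ'⟩ := quantile_near_one ν A B hAB hcdfA hcdfB hstrict (half_pos hε)
          have h1 : Tendsto (fun t : ℝ => phiConv F (t - a)) atTop (𝓝 1) :=
            (phiConv_tendsto_one hF).comp (tendsto_atTop_add_const_right _ _ tendsto_id)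
          filter_upwards [h1.eventually (eventually_gt_nhds (show 1 - δ < 1 by linarith))]
            with t ht
          have hv1 : phiConv F (t - a) < 1 := phiConv_lt_one hF _
          have hv0 : 0 < phiConv F (t - a) := phiConv_pos hF _
          have hlow := hδ' _ ht hv1
          have hup : quantile ν (phiConv F (t - a)) ≤ B :=
            (quantile_mem_Icc ν A B hcdfA hcdfB hv0 hv1.le).2
          rw [Real.dist_eq]
          rw [abs_of_nonpos (by simp only [qconv]; linarith)]
          simp only [qconv] at *
          linarith)
      rwa [hB] at h
    have hGbot : Tendsto (Gop ν F) atBot (𝓝 A) := by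
      have hA' : ∫ (a : ℝ), A * stdGauss a = A := by
        rw [MeasureTheory.integral_const_mul, integral_stdGauss, mul_one]
      have h := tendsto_integral_filter_of_dominated_convergence (μ := volume)
        (F := fun (t : ℝ) (a : ℝ) => qconv ν F (t - a) * stdGauss a)
        (f := fun a => A * stdGauss a)
        (bound := fun a => max |A| |B| * stdGauss a) (l := atBot)
        (Eventually.of_forall fun t => (hGint t).aestronglyMeasurable)
        (Eventually.of_forall fun t => (Eventually.of_forall fun a => by
          rw [norm_mul, Real.norm_of_nonneg (stdGauss_pos a).le]
          exact mul_le_mul_of_nonneg_right (hκabs _) (stdGauss_pos a).le))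
        (integrable_stdGauss.const_mul _)
        (Eventually.of_forall fun a => by
          apply Tendsto.mul_const
          rw [Metric.tendsto_nhds]
          intro ε hε
          obtain ⟨δ, hδ, hδ'⟩ := quantile_near_zero ν A B hAB hcdfA hcdfB hstrict (half_pos hε)
          have h1 : Tendsto (fun t : ℝ => phiConv F (t - a)) atBot (𝓝 0) :=
            (phiConv_tendsto_zero hF).comp (tendsto_atBot_add_const_right _ _ tendsto_id)
          filter_upwards [h1.eventually (eventually_lt_nhds hδ)] with t ht
          have hv1 : phiConv F (t - a) < 1 := phiConv_lt_one hF _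
          have hv0 : 0 < phiConv F (t - a) := phiConv_pos hF _
          have hup := hδ' _ hv0 ht
          have hlow : A ≤ quantile ν (phiConv F (t - a)) :=
            (quantile_mem_Icc ν A B hcdfA hcdfB hv0 hv1.le).1
          rw [Real.dist_eq]
          rw [abs_of_nonneg (by simp only [qconv]; linarith)]
          simp only [qconv] at *
          linarith)
      rwa [hA'] at h
    have hSne : ∀ i, {t | x i ≤ Gop ν F t}.Nonempty := by
      intro i
      obtain ⟨t, ht⟩ := (hGtop.eventually (eventually_gt_nhds (hxIoo i).2)).exists
      exact ⟨t, ht.le⟩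
    have hSbdd : ∀ i, BddBelow {t | x i ≤ Gop ν F t} := by
      intro i
      obtain ⟨t0, ht0⟩ := (hGbot.eventually (eventually_lt_nhds (hxIoo i).1)).exists
      refine ⟨t0, fun s hs => ?_⟩
      by_contra hst
      push_neg at hst
      have h1 := hGmono hst.le
      have h2 : x i ≤ Gop ν F t0 := le_trans hs h1
      rw [mem_setOf_eq] at *
      linarith
    set y : Fin n → ℝ := fun i => sInf {t | x i ≤ Gop ν F t} with hydef
    have hSclosed : ∀ i, IsClosed {t | x i ≤ Gop ν F t} :=
      fun i => isClosed_le continuous_const hGcont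
    have hymem : ∀ i, x i ≤ Gop ν F (y i) :=
      fun i => (hSclosed i).csInf_mem (hSne i) (hSbdd i)
    have hGy : ∀ i, Gop ν F (y i) = x i := by
      intro i
      refine le_antisymm ?_ (hymem i)
      by_contra hlt
      push_neg at hlt
      have hopen : IsOpen {t | x i < Gop ν F t} := isOpen_lt continuous_const hGcont
      obtain ⟨ε, hε, hball⟩ := Metric.isOpen_iff.1 hopen _ hlt
      have hmem2 : y i - ε / 2 ∈ {t | x i ≤ Gop ν F t} := by
        have hd : dist (y i - ε / 2) (y i) < ε := by
          rw [Real.dist_eq, show y i - ε / 2 - y i = -(ε / 2) by ring, abs_neg,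
            abs_of_pos (by linarith)]
          linarith
        have h5 : x i < Gop ν F (y i - ε / 2) := hball (Metric.mem_ball.2 hd)
        exact h5.le
      have h3 := csInf_le (hSbdd i) hmem2
      have h4 : y i ≤ y i - ε / 2 := h3
      linarith
    have hiff : ∀ (i : Fin n) (t : ℝ), (x i ≤ Gop ν F t ↔ y i ≤ t) := by
      intro i t
      constructor
      · intro h; exact csInf_le (hSbdd i) h
      · intro h
        calc x i = Gop ν F (y i) := (hGy i).symm
          _ ≤ Gop ν F t := hGmono h
    have hymono : Monotone y := by
      intro i i' hii'
      apply csInf_le_csInf (hSbdd i) (hSne i')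
      intro t ht
      exact le_trans (hx hii') ht
    have hFstep : ∀ t, F t = ∑ j, if y j ≤ t then w j else 0 := by
      intro t
      rw [← hfix t, opA_eq, hμcdf (Gop ν F t)]
      exact Finset.sum_congr rfl fun j _ => if_congr (hiff j t) rfl rfl
    refine ⟨y, hymono, hFstep, fun i => ?_⟩
    rw [hGcongr y hFstep i, hGy i]
  · -- backward direction
    rintro ⟨y, hymono, hFstep, hsys⟩
    have hstep' := phiConv_step y w hFstep
    have hGstrict : ∀ t t', t < t' → Gop ν F t < Gop ν F t' := by
      intro t t' htt'
      have hpt : ∀ a : ℝ, qconv ν F (t - a) < qconv ν F (t' - a) := by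
        intro a
        apply quantile_strictMonoOn ν A B hcont hcdfA hcdfB (phiConv_pos hF _) ?_
          (phiConv_lt_one hF _).le
        rw [hstep' (t - a), hstep' (t' - a)]
        apply Finset.sum_lt_sum_of_nonempty (Finset.univ_nonempty_iff.2 ?_)
        · intro j _
          apply mul_lt_mul_of_pos_left _ (hw j)
          exact stdGaussCDF_strictMono (by linarith)
        · rwa [← Fin.pos_iff_nonempty]
      have hdiff : 0 < ∫ a, (qconv ν F (t' - a) - qconv ν F (t - a)) * stdGauss a := by
        rw [integral_pos_iff_support_of_nonneg]
        · have hsupp : Function.support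
              (fun a => (qconv ν F (t' - a) - qconv ν F (t - a)) * stdGauss a) = univ := by
            ext a
            simp only [Function.mem_support, mem_univ, iff_true]
            exact ne_of_gt (mul_pos (sub_pos.2 (hpt a)) (stdGauss_pos a))
          rw [hsupp, Real.volume_univ]
          exact ENNReal.zero_lt_top
        · intro a; exact mul_nonneg (sub_nonneg.2 (hpt a).le) (stdGauss_pos a).le
        · simp only [sub_mul]
          exact (hGint t').sub (hGint t)
      have heq : ∫ a, (qconv ν F (t' - a) - qconv ν F (t - a)) * stdGauss a
          = Gop ν F t' - Gop ν F t := by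
        simp only [sub_mul]
        rw [integral_sub (hGint t') (hGint t)]
        rfl
      rw [heq] at hdiff
      linarith
    have hGy : ∀ i, Gop ν F (y i) = x i := by
      intro i
      rw [← hGcongr y hFstep i]
      exact hsys i
    intro t
    rw [opA_eq, hμcdf (Gop ν F t), hFstep t]
    apply Finset.sum_congr rfl
    intro j _
    refine if_congr ?_ rfl rfl
    rw [← hGy j]
    constructor
    · intro h
      by_contra hlt
      push_neg at hlt
      have := hGstrict t (y j) hlt
      linarith
    · intro h
      exact hGmono h
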